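/- Let A, B be symmetric n×n matrices with U = B − A positive definite. Suppose f : ℝⁿ → ℝ is B-semi-concave, g : ℝⁿ → ℝ is (−A)-semi-convex (i.e., −g is (−A)-semi-concave), f ≥ g everywhere, and let K = argmin(f − g). Then f and g are differentiable at points of K with df = dg there, and for all x₁, x₂ ∈ K: ‖df(x₂) − df(x₁) − ½(A+B)(x₂−x₁)‖_{U⁻¹} ≤ ½‖x₂−x₁‖_U, where ‖v‖_M = √((Mv)·v). -/

import Mathlib

open Matrix

/-- The gradient vector of f : ℝⁿ → ℝ at x, as a vector in ℝⁿ. -/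
noncomputable def gradVec {n : ℕ} (f : (Fin n → ℝ) → ℝ) (x : Fin n → ℝ) :
    Fin n → ℝ :=
  fun i => fderiv ℝ f x (Pi.single i 1)

private lemma auxCross {n : ℕ} {A : Matrix (Fin n) (Fin n) ℝ} (hA : A.IsSymm)
    (u v : Fin n → ℝ) : (A *ᵥ u) ⬝ᵥ v = (A *ᵥ v) ⬝ᵥ u := by
  rw [dotProduct_comm, Matrix.dotProduct_mulVec, ← Matrix.mulVec_transpose, hA.eq]

private lemma auxExpand {n : ℕ} {A : Matrix (Fin n) (Fin n) ℝ} (hA : A.IsSymm)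
    (u v : Fin n → ℝ) :
    (A *ᵥ (u + v)) ⬝ᵥ (u + v)
      = (A *ᵥ u) ⬝ᵥ u + 2 * ((A *ᵥ v) ⬝ᵥ u) + (A *ᵥ v) ⬝ᵥ v := by
  rw [Matrix.mulVec_add, add_dotProduct, dotProduct_add, dotProduct_add,
    auxCross hA u v]
  ring

private lemma auxQuadBound {n : ℕ} (M : Matrix (Fin n) (Fin n) ℝ) (h : Fin n → ℝ) :
    |(M *ᵥ h) ⬝ᵥ h| ≤ (∑ i, ∑ j, |M i j|) * ‖h‖ ^ 2 := by
  have hb : ∀ i : Fin n, |h i| ≤ ‖h‖ := fun i => by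
    simpa using norm_le_pi_norm h i
  have hn : 0 ≤ ‖h‖ := norm_nonneg h
  calc |(M *ᵥ h) ⬝ᵥ h| = |∑ i, (∑ j, M i j * h j) * h i| := by
        simp [Matrix.mulVec, dotProduct]
    _ ≤ ∑ i, |(∑ j, M i j * h j) * h i| := Finset.abs_sum_le_sum_abs _ _
    _ ≤ ∑ i, (∑ j, |M i j|) * ‖h‖ ^ 2 := by
        apply Finset.sum_le_sum
        intro i _
        rw [abs_mul]
        have h1 : |∑ j, M i j * h j| ≤ (∑ j, |M i j|) * ‖h‖ := by
          calc |∑ j, M i j * h j| ≤ ∑ j, |M i j * h j| := Finset.abs_sum_le_sum_abs _ _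
            _ ≤ ∑ j, |M i j| * ‖h‖ := by
                apply Finset.sum_le_sum
                intro j _
                rw [abs_mul]
                exact mul_le_mul_of_nonneg_left (hb j) (abs_nonneg _)
            _ = (∑ j, |M i j|) * ‖h‖ := by rw [Finset.sum_mul]
        have h2 : 0 ≤ ∑ j, |M i j| := Finset.sum_nonneg fun j _ => abs_nonneg _
        calc |∑ j, M i j * h j| * |h i| ≤ ((∑ j, |M i j|) * ‖h‖) * ‖h‖ := by
              apply mul_le_mul h1 (hb i) (abs_nonneg _)
              positivity
          _ = (∑ j, |M i j|) * ‖h‖ ^ 2 := by ring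
    _ = (∑ i, ∑ j, |M i j|) * ‖h‖ ^ 2 := by rw [Finset.sum_mul]

private lemma auxLApply {n : ℕ} (l y : Fin n → ℝ) :
    (∑ i, l i • (ContinuousLinearMap.proj i : (Fin n → ℝ) →L[ℝ] ℝ)) y = l ⬝ᵥ y := by
  simp [dotProduct, ContinuousLinearMap.sum_apply]

private lemma auxHasFDeriv {n : ℕ} (f : (Fin n → ℝ) → ℝ) (x l : Fin n → ℝ) (C : ℝ)
    (hC : 0 ≤ C) (hb : ∀ y, |f y - f x - l ⬝ᵥ (y - x)| ≤ C * ‖y - x‖ ^ 2) :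
    HasFDerivAt f (∑ i, l i • (ContinuousLinearMap.proj i : (Fin n → ℝ) →L[ℝ] ℝ)) x := by
  rw [hasFDerivAt_iff_isLittleO_nhds_zero, Asymptotics.isLittleO_iff]
  intro c hc
  have hpos : 0 < c / (C + 1) := by positivity
  filter_upwards [Metric.ball_mem_nhds (0 : Fin n → ℝ) hpos] with h hh
  rw [mem_ball_zero_iff] at hh
  have h1 : |f (x + h) - f x - l ⬝ᵥ h| ≤ C * ‖h‖ ^ 2 := by
    have := hb (x + h)
    simpa using this
  rw [auxLApply]
  have h2 : C * ‖h‖ ≤ C * (c / (C + 1)) := mul_le_mul_of_nonneg_left hh.le hC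
  have h3 : C * (c / (C + 1)) ≤ c := by
    rw [mul_div_assoc', div_le_iff₀ (by linarith)]
    nlinarith
  calc ‖f (x + h) - f x - l ⬝ᵥ h‖ ≤ C * ‖h‖ ^ 2 := h1
    _ = (C * ‖h‖) * ‖h‖ := by ring
    _ ≤ c * ‖h‖ := mul_le_mul_of_nonneg_right (by linarith) (norm_nonneg h)

private lemma auxQuadCoefZero {a b : ℝ} (hb : 0 ≤ b)
    (h : ∀ t : ℝ, 0 ≤ t * a + t ^ 2 * b) : a = 0 := by
  have hd : 0 < 2 * b + 2 := by linarith
  have h1 := h (-a / (2 * b + 2))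
  have h2 : (-a / (2 * b + 2)) * a + (-a / (2 * b + 2)) ^ 2 * b
      = (-(a ^ 2) * (2 * b + 2) + a ^ 2 * b) / (2 * b + 2) ^ 2 := by
    field_simp
  rw [h2] at h1
  have h3 : 0 ≤ -(a ^ 2) * (2 * b + 2) + a ^ 2 * b := by
    have := (div_nonneg_iff.mp h1)
    rcases this with ⟨h4, _⟩ | ⟨_, h5⟩
    · exact h4
    · nlinarith
  nlinarith [sq_nonneg a]

theorem stmt16 (n : ℕ) (A B : Matrix (Fin n) (Fin n) ℝ)
    (hA : A.IsSymm) (hB : B.IsSymm) (hU : (B - A).PosDef)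
    (f g : (Fin n → ℝ) → ℝ)
    (hf : ∀ x : Fin n → ℝ, ∃ l : Fin n → ℝ, ∀ y : Fin n → ℝ,
      f y - f x - l ⬝ᵥ (y - x) ≤ (1/2) * (B *ᵥ (y - x)) ⬝ᵥ (y - x))
    (hg : ∀ x : Fin n → ℝ, ∃ l : Fin n → ℝ, ∀ y : Fin n → ℝ,
      (-g) y - (-g) x - l ⬝ᵥ (y - x) ≤ (1/2) * ((-A) *ᵥ (y - x)) ⬝ᵥ (y - x))
    (hfg : ∀ x, g x ≤ f x)
    (K : Set (Fin n → ℝ)) (hK : K = {x | ∀ y, f x - g x ≤ f y - g y}) :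
    (∀ x ∈ K, DifferentiableAt ℝ f x ∧ DifferentiableAt ℝ g x ∧
      fderiv ℝ f x = fderiv ℝ g x) ∧
    ∀ x₁ ∈ K, ∀ x₂ ∈ K,
      Real.sqrt (((B - A)⁻¹ *ᵥ
          (gradVec f x₂ - gradVec f x₁ - (1/2 : ℝ) • ((A + B) *ᵥ (x₂ - x₁)))) ⬝ᵥ
          (gradVec f x₂ - gradVec f x₁ - (1/2 : ℝ) • ((A + B) *ᵥ (x₂ - x₁))))
        ≤ (1/2) * Real.sqrt (((B - A) *ᵥ (x₂ - x₁)) ⬝ᵥ (x₂ - x₁)) := by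
  have hmin : ∀ x ∈ K, ∀ y, f x - g x ≤ f y - g y := by
    intro x hx
    rw [hK] at hx
    exact hx
  have hUnn : ∀ v : Fin n → ℝ, 0 ≤ ((B - A) *ᵥ v) ⬝ᵥ v := by
    intro v
    have := hU.posSemidef.dotProduct_mulVec_nonneg v
    simpa [dotProduct_comm] using this
  -- Step 1: sandwich at points of K
  have sandwich : ∀ x ∈ K, ∃ l : Fin n → ℝ,
      (∀ y, f y - f x - l ⬝ᵥ (y - x) ≤ (1/2) * (B *ᵥ (y - x)) ⬝ᵥ (y - x)) ∧
      (∀ y, (1/2) * (A *ᵥ (y - x)) ⬝ᵥ (y - x) ≤ g y - g x - l ⬝ᵥ (y - x)) := by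
    intro x hx
    obtain ⟨l, hl⟩ := hf x
    obtain ⟨m, hm⟩ := hg x
    have hgl : ∀ y, (1/2) * (A *ᵥ (y - x)) ⬝ᵥ (y - x) ≤ g y - g x - (-m) ⬝ᵥ (y - x) := by
      intro y
      have hm' := hm y
      simp only [Pi.neg_apply] at hm'
      have eA : ((-A) *ᵥ (y - x)) ⬝ᵥ (y - x) = -((A *ᵥ (y - x)) ⬝ᵥ (y - x)) := by
        rw [Matrix.neg_mulVec, neg_dotProduct]
      have em : (-m) ⬝ᵥ (y - x) = -(m ⬝ᵥ (y - x)) := neg_dotProduct _ _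
      rw [eA] at hm'
      rw [em]
      linarith
    have hsq : ∀ h : Fin n → ℝ,
        0 ≤ (l - (-m)) ⬝ᵥ h + (1/2) * ((B - A) *ᵥ h) ⬝ᵥ h := by
      intro h
      have h1 := hl (x + h)
      have h2 := hgl (x + h)
      have h3 := hmin x hx (x + h)
      rw [add_sub_cancel_left] at h1 h2
      have e : (l - (-m)) ⬝ᵥ h = l ⬝ᵥ h - (-m) ⬝ᵥ h := sub_dotProduct _ _ _
      have e2 : ((B - A) *ᵥ h) ⬝ᵥ h = (B *ᵥ h) ⬝ᵥ h - (A *ᵥ h) ⬝ᵥ h := by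
        rw [Matrix.sub_mulVec, sub_dotProduct]
      rw [e, e2]
      linarith
    have hlm : l = -m := by
      funext i
      have key : ∀ t : ℝ, 0 ≤ t * ((l - (-m)) ⬝ᵥ Pi.single i 1)
          + t ^ 2 * ((1/2) * ((B - A) *ᵥ Pi.single i 1) ⬝ᵥ Pi.single i 1) := by
        intro t
        have h5 := hsq (t • (Pi.single i 1 : Fin n → ℝ))
        rw [dotProduct_smul, Matrix.mulVec_smul, smul_dotProduct,
          dotProduct_smul] at h5
        simp only [smul_eq_mul] at h5
        nlinarith [h5]
      have hb0 : 0 ≤ (1/2) * ((B - A) *ᵥ Pi.single i 1) ⬝ᵥ Pi.single i 1 := by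
        have := hUnn (Pi.single i 1)
        linarith
      have hz := auxQuadCoefZero hb0 key
      rw [sub_dotProduct, dotProduct_single, dotProduct_single] at hz
      simp only [Pi.neg_apply, mul_one] at hz ⊢
      linarith
    exact ⟨l, hl, by intro y; rw [hlm]; exact hgl y⟩
  -- Step 2: differentiability with derivative given by the sandwich vector
  have diffstep : ∀ x ∈ K, ∀ l : Fin n → ℝ,
      (∀ y, f y - f x - l ⬝ᵥ (y - x) ≤ (1/2) * (B *ᵥ (y - x)) ⬝ᵥ (y - x)) →
      (∀ y, (1/2) * (A *ᵥ (y - x)) ⬝ᵥ (y - x) ≤ g y - g x - l ⬝ᵥ (y - x)) →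
      HasFDerivAt f (∑ i, l i • (ContinuousLinearMap.proj i : (Fin n → ℝ) →L[ℝ] ℝ)) x ∧
      HasFDerivAt g (∑ i, l i • (ContinuousLinearMap.proj i : (Fin n → ℝ) →L[ℝ] ℝ)) x ∧
      gradVec f x = l := by
    intro x hx l hfl hgl
    obtain ⟨C, hCdef⟩ : ∃ C : ℝ, C = (1/2) * (∑ i, ∑ j, |A i j|) + (1/2) * (∑ i, ∑ j, |B i j|) :=
      ⟨_, rfl⟩
    have hCA : 0 ≤ ∑ i, ∑ j, |A i j| :=
      Finset.sum_nonneg fun i _ => Finset.sum_nonneg fun j _ => abs_nonneg _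
    have hCB : 0 ≤ ∑ i, ∑ j, |B i j| :=
      Finset.sum_nonneg fun i _ => Finset.sum_nonneg fun j _ => abs_nonneg _
    have hC : 0 ≤ C := by rw [hCdef]; positivity
    have hbound : ∀ y : Fin n → ℝ,
        (1/2) * (A *ᵥ (y - x)) ⬝ᵥ (y - x) ≤ f y - f x - l ⬝ᵥ (y - x) ∧
        (1/2) * (A *ᵥ (y - x)) ⬝ᵥ (y - x) ≤ g y - g x - l ⬝ᵥ (y - x) ∧
        f y - f x - l ⬝ᵥ (y - x) ≤ (1/2) * (B *ᵥ (y - x)) ⬝ᵥ (y - x) ∧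
        g y - g x - l ⬝ᵥ (y - x) ≤ (1/2) * (B *ᵥ (y - x)) ⬝ᵥ (y - x) := by
      intro y
      have h1 := hfl y
      have h2 := hgl y
      have h3 := hmin x hx y
      exact ⟨by linarith, h2, h1, by linarith⟩
    have habs : ∀ (F : (Fin n → ℝ) → ℝ),
        (∀ y, (1/2) * (A *ᵥ (y - x)) ⬝ᵥ (y - x) ≤ F y - F x - l ⬝ᵥ (y - x)) →
        (∀ y, F y - F x - l ⬝ᵥ (y - x) ≤ (1/2) * (B *ᵥ (y - x)) ⬝ᵥ (y - x)) →
        ∀ y, |F y - F x - l ⬝ᵥ (y - x)| ≤ C * ‖y - x‖ ^ 2 := by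
      intro F hlo hhi y
      have hA' := auxQuadBound A (y - x)
      have hB' := auxQuadBound B (y - x)
      have h1 := hlo y
      have h2 := hhi y
      have hsqn : (0:ℝ) ≤ ‖y - x‖ ^ 2 := sq_nonneg _
      have hCs : C * ‖y - x‖ ^ 2
          = (1/2) * ((∑ i, ∑ j, |A i j|) * ‖y - x‖ ^ 2)
            + (1/2) * ((∑ i, ∑ j, |B i j|) * ‖y - x‖ ^ 2) := by
        rw [hCdef]; ring
      have nA := neg_abs_le ((A *ᵥ (y - x)) ⬝ᵥ (y - x))
      have nB := le_abs_self ((B *ᵥ (y - x)) ⬝ᵥ (y - x))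
      have pA := mul_nonneg hCA hsqn
      have pB := mul_nonneg hCB hsqn
      rw [abs_le]
      constructor
      · linarith
      · linarith
    have hFd : HasFDerivAt f
        (∑ i, l i • (ContinuousLinearMap.proj i : (Fin n → ℝ) →L[ℝ] ℝ)) x :=
      auxHasFDeriv f x l C hC (habs f (fun y => (hbound y).1) (fun y => (hbound y).2.2.1))
    have hGd : HasFDerivAt g
        (∑ i, l i • (ContinuousLinearMap.proj i : (Fin n → ℝ) →L[ℝ] ℝ)) x :=
      auxHasFDeriv g x l C hC (habs g (fun y => (hbound y).2.1) (fun y => (hbound y).2.2.2))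
    refine ⟨hFd, hGd, ?_⟩
    funext i
    show fderiv ℝ f x (Pi.single i 1) = l i
    rw [hFd.fderiv, auxLApply, dotProduct_single, mul_one]
  constructor
  · intro x hx
    obtain ⟨l, hl1, hl2⟩ := sandwich x hx
    obtain ⟨hFd, hGd, _⟩ := diffstep x hx l hl1 hl2
    exact ⟨hFd.differentiableAt, hGd.differentiableAt, by rw [hFd.fderiv, hGd.fderiv]⟩
  · intro x₁ hx₁ x₂ hx₂
    obtain ⟨l₁, hl₁, hgl₁⟩ := sandwich x₁ hx₁
    obtain ⟨l₂, hl₂, hgl₂⟩ := sandwich x₂ hx₂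
    obtain ⟨_, _, hgrad₁⟩ := diffstep x₁ hx₁ l₁ hl₁ hgl₁
    obtain ⟨_, _, hgrad₂⟩ := diffstep x₂ hx₂ l₂ hl₂ hgl₂
    rw [hgrad₁, hgrad₂]
    set d : Fin n → ℝ := x₂ - x₁ with hd
    set q : Fin n → ℝ := l₂ - l₁ - A *ᵥ d with hq
    have hdet : IsUnit (B - A).det := hU.det_pos.ne'.isUnit
    have hUU : (B - A)⁻¹ *ᵥ ((B - A) *ᵥ d) = d := by
      rw [Matrix.mulVec_mulVec, Matrix.nonsing_inv_mul _ hdet, Matrix.one_mulVec]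
    have hUU2 : (B - A) *ᵥ ((B - A)⁻¹ *ᵥ q) = q := by
      rw [Matrix.mulVec_mulVec, Matrix.mul_nonsing_inv _ hdet, Matrix.one_mulVec]
    have hsymU : (B - A).IsSymm := by
      rw [Matrix.IsSymm, Matrix.transpose_sub, hA.eq, hB.eq]
    have hsymUinv : ((B - A)⁻¹).IsSymm := by
      rw [Matrix.IsSymm, Matrix.transpose_nonsing_inv, hsymU.eq]
    -- main quadratic inequality
    have main : ∀ w : Fin n → ℝ,
        0 ≤ q ⬝ᵥ d + 2 * (q ⬝ᵥ w) + ((B - A) *ᵥ w) ⬝ᵥ w := by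
      intro w
      have d1 : x₂ + w - x₂ = w := by abel
      have d2 : x₂ + w - x₁ = w + d := by rw [hd]; abel
      have d3 : x₁ - w - x₁ = -w := by abel
      have d4 : x₁ - w - x₂ = -(w + d) := by rw [hd]; abel
      have I1 := hl₂ (x₂ + w); rw [d1] at I1
      have I2 := hgl₁ (x₂ + w); rw [d2] at I2
      have I3 := hmin x₁ hx₁ (x₂ + w)
      have J1 := hl₁ (x₁ - w); rw [d3] at J1
      have J2 := hgl₂ (x₁ - w); rw [d4] at J2
      have J3 := hmin x₂ hx₂ (x₁ - w)
      have eB : (B *ᵥ (-w)) ⬝ᵥ (-w) = (B *ᵥ w) ⬝ᵥ w := by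
        rw [Matrix.mulVec_neg, neg_dotProduct, dotProduct_neg, neg_neg]
      have eAn : (A *ᵥ (-(w + d))) ⬝ᵥ (-(w + d)) = (A *ᵥ (w + d)) ⬝ᵥ (w + d) := by
        rw [Matrix.mulVec_neg, neg_dotProduct, dotProduct_neg, neg_neg]
      have eA2 : (A *ᵥ (w + d)) ⬝ᵥ (w + d)
          = (A *ᵥ w) ⬝ᵥ w + 2 * ((A *ᵥ d) ⬝ᵥ w) + (A *ᵥ d) ⬝ᵥ d := auxExpand hA w d
      have el1 : l₁ ⬝ᵥ (w + d) = l₁ ⬝ᵥ w + l₁ ⬝ᵥ d := dotProduct_add _ _ _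
      have el1n : l₁ ⬝ᵥ (-w) = -(l₁ ⬝ᵥ w) := dotProduct_neg _ _
      have el2n : l₂ ⬝ᵥ (-(w + d)) = -(l₂ ⬝ᵥ w + l₂ ⬝ᵥ d) := by
        rw [dotProduct_neg, dotProduct_add]
      have eq1 : q ⬝ᵥ d = l₂ ⬝ᵥ d - l₁ ⬝ᵥ d - (A *ᵥ d) ⬝ᵥ d := by
        rw [hq, sub_dotProduct, sub_dotProduct]
      have eq2 : q ⬝ᵥ w = l₂ ⬝ᵥ w - l₁ ⬝ᵥ w - (A *ᵥ d) ⬝ᵥ w := by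
        rw [hq, sub_dotProduct, sub_dotProduct]
      have eU : ((B - A) *ᵥ w) ⬝ᵥ w = (B *ᵥ w) ⬝ᵥ w - (A *ᵥ w) ⬝ᵥ w := by
        rw [Matrix.sub_mulVec, sub_dotProduct]
      rw [eq1, eq2, eU]
      rw [eB] at J1
      rw [eAn] at J2
      rw [eA2] at I2 J2
      rw [el1] at I2
      rw [el1n] at J1
      rw [el2n] at J2
      linarith
    -- key inequality
    have hkey : ((B - A)⁻¹ *ᵥ q) ⬝ᵥ q ≤ q ⬝ᵥ d := by
      have h0 := main (-((B - A)⁻¹ *ᵥ q))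
      have e1 : q ⬝ᵥ (-((B - A)⁻¹ *ᵥ q)) = -(((B - A)⁻¹ *ᵥ q) ⬝ᵥ q) := by
        rw [dotProduct_neg, dotProduct_comm]
      have e2 : ((B - A) *ᵥ (-((B - A)⁻¹ *ᵥ q))) ⬝ᵥ (-((B - A)⁻¹ *ᵥ q))
          = ((B - A)⁻¹ *ᵥ q) ⬝ᵥ q := by
        rw [Matrix.mulVec_neg, neg_dotProduct, dotProduct_neg, neg_neg, hUU2,
          dotProduct_comm]
      rw [e1, e2] at h0
      linarith
    -- final algebra
    set p : Fin n → ℝ := l₂ - l₁ - (1/2 : ℝ) • ((A + B) *ᵥ d) with hp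
    have hpq : p = q - (1/2 : ℝ) • ((B - A) *ᵥ d) := by
      funext i
      simp only [hp, hq, Pi.sub_apply, Pi.smul_apply, Matrix.add_mulVec, Matrix.sub_mulVec,
        Pi.add_apply, smul_eq_mul]
      ring
    have e1 : (B - A)⁻¹ *ᵥ p = (B - A)⁻¹ *ᵥ q - (1/2 : ℝ) • d := by
      rw [hpq, Matrix.mulVec_sub, Matrix.mulVec_smul, hUU]
    have c1 : ((B - A)⁻¹ *ᵥ q) ⬝ᵥ ((B - A) *ᵥ d) = q ⬝ᵥ d := by
      rw [auxCross hsymUinv, hUU, dotProduct_comm]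
    have c2 : d ⬝ᵥ ((B - A) *ᵥ d) = ((B - A) *ᵥ d) ⬝ᵥ d := dotProduct_comm _ _
    have c3 : d ⬝ᵥ q = q ⬝ᵥ d := dotProduct_comm _ _
    have e2 : ((B - A)⁻¹ *ᵥ p) ⬝ᵥ p
        = ((B - A)⁻¹ *ᵥ q) ⬝ᵥ q - q ⬝ᵥ d + (1/4) * (((B - A) *ᵥ d) ⬝ᵥ d) := by
      rw [e1, hpq]
      simp only [sub_dotProduct, dotProduct_sub, smul_dotProduct,
        dotProduct_smul, smul_eq_mul]
      rw [c1, c2, c3]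
      ring
    have hfinal : ((B - A)⁻¹ *ᵥ p) ⬝ᵥ p ≤ (1/4) * (((B - A) *ᵥ d) ⬝ᵥ d) := by
      rw [e2]; linarith
    calc Real.sqrt (((B - A)⁻¹ *ᵥ p) ⬝ᵥ p)
        ≤ Real.sqrt ((1/4) * (((B - A) *ᵥ d) ⬝ᵥ d)) := Real.sqrt_le_sqrt hfinal
      _ = (1/2) * Real.sqrt (((B - A) *ᵥ d) ⬝ᵥ d) := by
          rw [show (1/4 : ℝ) * (((B - A) *ᵥ d) ⬝ᵥ d)
              = (1/2 : ℝ) ^ 2 * (((B - A) *ᵥ d) ⬝ᵥ d) by ring,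
            Real.sqrt_mul (by positivity), Real.sqrt_sq (by norm_num)]
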